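/- Let B = (G, β) be a bicolored graph on a triangle with vertices a, b, c. Then applying local inversions along the string abababcac (length 9) yields B_w = (G, -β); that is, all three vertex colors are flipped and the underlying graph remains the triangle. -/

import Mathlib

open Classical

noncomputable section

/-- The local complement of a simple graph `G` at a vertex `a`: adjacency is toggled
between every pair of distinct neighbors of `a`, all other adjacencies unchanged. -/
def localComp {V : Type*} (G : SimpleGraph V) (a : V) : SimpleGraph V where
  Adj x y := (G.Adj a x ∧ G.Adj a y ∧ x ≠ y ∧ ¬ G.Adj x y) ∨
             (G.Adj x y ∧ ¬ (G.Adj a x ∧ G.Adj a y))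
  symm := by
    refine ⟨?_⟩
    intro x y h
    rcases h with ⟨hx, hy, hne, hna⟩ | ⟨h, hn⟩
    · exact Or.inl ⟨hy, hx, hne.symm, fun h' => hna h'.symm⟩
    · exact Or.inr ⟨h.symm, fun h' => hn ⟨h'.2, h'.1⟩⟩
  loopless := by
    refine ⟨?_⟩
    intro x h
    rcases h with ⟨_, _, hne, _⟩ | ⟨h, _⟩
    · exact hne rfl
    · exact G.loopless.irrefl x h

/-- A bicolored graph: a simple graph together with a `{-1,1}`-coloring (units of ℤ). -/
abbrev Bicolored (V : Type*) := SimpleGraph V × (V → ℤˣ)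

/-- Local inversion at a vertex `a`: locally complement the graph at `a` and flip
the colors of all neighbors of `a`. -/
def localInv {V : Type*} (B : Bicolored V) (a : V) : Bicolored V :=
  (localComp B.1 a, fun v => if B.1.Adj a v then - B.2 v else B.2 v)

/-- Sequential local inversion along a string (list) of vertices. -/
def invSeq {V : Type*} (B : Bicolored V) (w : List V) : Bicolored V :=
  w.foldl localInv B

/-- `flipOn B S` keeps the underlying graph and flips the colors exactly on `S`. -/
def flipOn {V : Type*} (B : Bicolored V) (S : Set V) : Bicolored V :=
  (B.1, fun v => if v ∈ S then - B.2 v else B.2 v)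

end

section Tri

/-- triangle-shaped graph with edge flags -/
def tri {V : Type*} (a b c : V) (p q r : Prop) : SimpleGraph V :=
  SimpleGraph.fromRel (fun x y => (x = a ∧ y = b ∧ p) ∨ (x = a ∧ y = c ∧ q) ∨ (x = b ∧ y = c ∧ r))

variable {V : Type*} {a b c : V}
variable (hab : a ≠ b) (hbc : b ≠ c) (hac : a ≠ c)
  (huniv : ∀ v : V, v = a ∨ v = b ∨ v = c)

include hab hbc hac huniv in
lemma top_eq_tri : (⊤ : SimpleGraph V) = tri a b c True True True := by
  ext x y
  rcases huniv x with rfl | rfl | rfl <;> rcases huniv y with rfl | rfl | rfl <;>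
    simp [tri, SimpleGraph.fromRel_adj, hab, hbc, hac, hab.symm, hbc.symm, hac.symm] <;> tauto

include hab hbc hac huniv in
lemma localComp_tri_a (p q r : Prop) :
    localComp (tri a b c p q r) a = tri a b c p q ((p ∧ q ∧ ¬r) ∨ (r ∧ ¬(p ∧ q))) := by
  ext x y
  rcases huniv x with rfl | rfl | rfl <;> rcases huniv y with rfl | rfl | rfl <;>
    simp [localComp, tri, SimpleGraph.fromRel_adj, hab, hbc, hac, hab.symm, hbc.symm, hac.symm] <;>
    tauto

include hab hbc hac huniv in
lemma localComp_tri_b (p q r : Prop) :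
    localComp (tri a b c p q r) b = tri a b c p ((p ∧ r ∧ ¬q) ∨ (q ∧ ¬(p ∧ r))) r := by
  ext x y
  rcases huniv x with rfl | rfl | rfl <;> rcases huniv y with rfl | rfl | rfl <;>
    simp [localComp, tri, SimpleGraph.fromRel_adj, hab, hbc, hac, hab.symm, hbc.symm, hac.symm] <;>
    tauto

include hab hbc hac huniv in
lemma localComp_tri_c (p q r : Prop) :
    localComp (tri a b c p q r) c = tri a b c ((q ∧ r ∧ ¬p) ∨ (p ∧ ¬(q ∧ r))) q r := by
  ext x y
  rcases huniv x with rfl | rfl | rfl <;> rcases huniv y with rfl | rfl | rfl <;>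
    simp [localComp, tri, SimpleGraph.fromRel_adj, hab, hbc, hac, hab.symm, hbc.symm, hac.symm] <;>
    tauto

include hab hbc hac in
lemma tri_congr {p q r p' q' r' : Prop} (hp : p ↔ p') (hq : q ↔ q') (hr : r ↔ r') :
    tri a b c p q r = tri a b c p' q' r' := by
  ext x y
  simp [tri, SimpleGraph.fromRel_adj, hp, hq, hr]

include hab hbc hac in
lemma tri_adj_ab (p q r : Prop) : (tri a b c p q r).Adj a b ↔ p := by
  simp [tri, SimpleGraph.fromRel_adj, hab, hbc, hac, hab.symm, hbc.symm, hac.symm]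
include hab hbc hac in
lemma tri_adj_ba (p q r : Prop) : (tri a b c p q r).Adj b a ↔ p := by
  simp [tri, SimpleGraph.fromRel_adj, hab, hbc, hac, hab.symm, hbc.symm, hac.symm]
include hab hbc hac in
lemma tri_adj_ac (p q r : Prop) : (tri a b c p q r).Adj a c ↔ q := by
  simp [tri, SimpleGraph.fromRel_adj, hab, hbc, hac, hab.symm, hbc.symm, hac.symm]
include hab hbc hac in
lemma tri_adj_ca (p q r : Prop) : (tri a b c p q r).Adj c a ↔ q := by
  simp [tri, SimpleGraph.fromRel_adj, hab, hbc, hac, hab.symm, hbc.symm, hac.symm]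
include hab hbc hac in
lemma tri_adj_bc (p q r : Prop) : (tri a b c p q r).Adj b c ↔ r := by
  simp [tri, SimpleGraph.fromRel_adj, hab, hbc, hac, hab.symm, hbc.symm, hac.symm]
include hab hbc hac in
lemma tri_adj_cb (p q r : Prop) : (tri a b c p q r).Adj c b ↔ r := by
  simp [tri, SimpleGraph.fromRel_adj, hab, hbc, hac, hab.symm, hbc.symm, hac.symm]
lemma tri_adj_self (x : V) (p q r : Prop) : (tri a b c p q r).Adj x x ↔ False := by
  simp

end Tri

/-- A bicolored graph on a triangle `abc` is color-reversed by the string `abababcac`. -/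
theorem stmt5 {V : Type*} (B : Bicolored V) (a b c : V)
    (hab : a ≠ b) (hbc : b ≠ c) (hac : a ≠ c)
    (huniv : ∀ v : V, v = a ∨ v = b ∨ v = c) (hG : B.1 = ⊤) :
    invSeq B [a, b, a, b, a, b, c, a, c] = (B.1, fun v => - B.2 v) := by
  obtain ⟨G, f⟩ := B
  simp only at hG
  subst hG
  have h1 := localComp_tri_a hab hbc hac huniv
  have h2 := localComp_tri_b hab hbc hac huniv
  have h3 := localComp_tri_c hab hbc hac huniv
  have ht := top_eq_tri hab hbc hac huniv
  have hTTT : ∀ p q r : Prop, p → q → r → tri a b c p q r = tri a b c True True True := by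
    intro p q r hp hq hr
    exact tri_congr hab hbc hac (by tauto) (by tauto) (by tauto)
  simp only [invSeq, List.foldl, localInv, ht, h1, h2, h3, not_true, not_false_iff,
    true_and, and_true, false_and, and_false, true_or, or_true, false_or, or_false,
    and_self, or_self]
  rw [Prod.ext_iff]
  refine ⟨?_, ?_⟩
  · simpa using ht.symm
  · funext v
    rcases huniv v with rfl | rfl | rfl <;>
      simp [tri_adj_ab hab hbc hac, tri_adj_ba hab hbc hac, tri_adj_ac hab hbc hac,
        tri_adj_ca hab hbc hac, tri_adj_bc hab hbc hac, tri_adj_cb hab hbc hac, tri_adj_self]
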